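/- Let p, q be probability vectors on [n] with q having positive entries. Then ‖p - q‖₁² ≤ 2 KL(p ‖ q). -/

import Mathlib

open Real

private lemma pinsker_F_deriv (y : ℝ) (hy : 0 < y) :
    HasDerivAt (fun y : ℝ => (y-1)*(y+5)/(2*(2*y+1)) - Real.log y)
      ((y-1)^3/(y*(2*y+1)^2)) y := by
  have hden : 2*(2*y+1) ≠ 0 := by nlinarith
  have h1 : HasDerivAt (fun y : ℝ => (y-1)*(y+5))
      ((1)*(y+5) + (y-1)*1) y := ((hasDerivAt_id y).sub_const 1).mul ((hasDerivAt_id y).add_const 5)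
  have h2 : HasDerivAt (fun y : ℝ => 2*(2*y+1)) (2*2) y := by
    simpa using (((hasDerivAt_id y).const_mul 2).add_const 1).const_mul 2
  have h3 := (h1.div h2 hden).sub (Real.hasDerivAt_log hy.ne')
  refine h3.congr_deriv ?_
  have hy0 : y ≠ 0 := hy.ne'
  have h2y : 2*y+1 ≠ 0 := by linarith
  field_simp
  ring

private lemma pinsker_log_le (y : ℝ) (hy : 0 < y) :
    Real.log y ≤ (y-1)*(y+5)/(2*(2*y+1)) := by
  set F : ℝ → ℝ := fun y => (y-1)*(y+5)/(2*(2*y+1)) - Real.log y with hF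
  have hF1 : F 1 = 0 := by simp [hF]
  have key : 0 ≤ F y := by
    rcases le_or_gt 1 y with h | h
    · -- monotone on [1, y]
      have mono : MonotoneOn F (Set.Ici (1:ℝ)) := by
        apply monotoneOn_of_deriv_nonneg (convex_Ici 1)
        · intro x hx
          exact ((pinsker_F_deriv x (by simp at hx; linarith)).continuousAt).continuousWithinAt
        · intro x hx
          simp only [interior_Ici] at hx
          exact (pinsker_F_deriv x (by simp at hx; linarith)).differentiableAt.differentiableWithinAt
        · intro x hx
          simp only [interior_Ici] at hx
          have hx1 : (1:ℝ) < x := hx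
          rw [(pinsker_F_deriv x (by linarith)).deriv]
          apply div_nonneg
          · have : (0:ℝ) ≤ x - 1 := by linarith
            positivity
          · have hx0 : (0:ℝ) < x := by linarith
            positivity
      have := mono (Set.self_mem_Ici) (by exact h) h
      rwa [hF1] at this
    · have anti : AntitoneOn F (Set.Ioc (0:ℝ) 1) := by
        apply antitoneOn_of_deriv_nonpos (convex_Ioc 0 1)
        · intro x hx
          exact ((pinsker_F_deriv x hx.1).continuousAt).continuousWithinAt
        · intro x hx
          rw [interior_Ioc] at hx
          exact (pinsker_F_deriv x hx.1).differentiableAt.differentiableWithinAt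
        · intro x hx
          rw [interior_Ioc] at hx
          rw [(pinsker_F_deriv x hx.1).deriv]
          apply div_nonpos_of_nonpos_of_nonneg
          · have : x - 1 ≤ 0 := by linarith [hx.2]
            exact Odd.pow_nonpos ⟨1, by norm_num⟩ this
          · have hx0 : 0 < x := hx.1
            positivity
      have := anti (Set.mem_Ioc.2 ⟨hy, h.le⟩) (Set.mem_Ioc.2 ⟨one_pos, le_refl 1⟩) h.le
      rw [hF1] at this
      linarith
  have : 0 ≤ (y-1)*(y+5)/(2*(2*y+1)) - Real.log y := key
  linarith

private lemma pinsker_pointwise (p q : ℝ) (hp : 0 ≤ p) (hq : 0 < q) :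
    3*(p-q)^2/(2*(p+2*q)) ≤ p * Real.log (p/q) - p + q := by
  rcases hp.eq_or_lt with h | h
  · rw [← h]
    have e1 : (3:ℝ)*(0-q)^2/(2*(0+2*q)) = 3*q/4 := by field_simp; ring
    rw [e1]
    simp
    linarith
  · have hlog := pinsker_log_le (q/p) (div_pos hq h)
    have hq' : q ≠ 0 := hq.ne'
    have hp' : p ≠ 0 := h.ne'
    have hlogflip : Real.log (p/q) = - Real.log (q/p) := by
      rw [← Real.log_inv]; congr 1; field_simp
    rw [hlogflip]
    have hbound : (q/p-1)*(q/p+5)/(2*(2*(q/p)+1)) = (q-p)*(q+5*p)/(2*p*(2*q+p)) := by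
      field_simp
    rw [hbound] at hlog
    have h2 : p * (-Real.log (q/p)) ≥ p * (-((q-p)*(q+5*p)/(2*p*(2*q+p)))) := by
      apply mul_le_mul_of_nonneg_left _ h.le
      linarith
    have h3 : p * (-((q-p)*(q+5*p)/(2*p*(2*q+p)))) = (p-q)*(q+5*p)/(2*(2*q+p)) := by
      field_simp; ring
    rw [h3] at h2
    have h4 : (p-q)*(q+5*p)/(2*(2*q+p)) - p + q = 3*(p-q)^2/(2*(p+2*q)) := by
      have : (2:ℝ)*(2*q+p) ≠ 0 := by positivity
      field_simp
      ring
    linarith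

/-- Pinsker's inequality: for probability vectors `p, q` on `[n]` with `q` positive,
`‖p - q‖₁² ≤ 2 KL(p ‖ q)` (with the convention `0 log 0 = 0`). -/
theorem stmt_10 (n : ℕ) (p q : Fin n → ℝ)
    (hp : ∀ i, 0 ≤ p i) (hp1 : ∑ i, p i = 1)
    (hq : ∀ i, 0 < q i) (hq1 : ∑ i, q i = 1) :
    (∑ i, |p i - q i|) ^ 2 ≤ 2 * ∑ i, p i * Real.log (p i / q i) := by
  have hd : ∀ i, 0 < p i + 2 * q i := fun i => by have := hp i; have := hq i; linarith
  -- Cauchy-Schwarz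
  have cs : (∑ i, |p i - q i|) ^ 2 ≤
      (∑ i, (p i - q i)^2 / (p i + 2 * q i)) * (∑ i, (p i + 2 * q i)) := by
    apply Finset.sum_sq_le_sum_mul_sum_of_sq_eq_mul
    · intro i _; have := hd i; positivity
    · intro i _; exact (hd i).le
    · intro i _
      rw [sq_abs, div_mul_cancel₀ _ (hd i).ne']
  have hsum3 : (∑ i, (p i + 2 * q i)) = 3 := by
    rw [Finset.sum_add_distrib, ← Finset.mul_sum, hp1, hq1]; norm_num
  rw [hsum3] at cs
  -- pointwise bound summed
  have hpt : ∑ i, 3 * (p i - q i)^2 / (2 * (p i + 2 * q i)) ≤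
      ∑ i, (p i * Real.log (p i / q i) - p i + q i) :=
    Finset.sum_le_sum fun i _ => pinsker_pointwise (p i) (q i) (hp i) (hq i)
  have hsplit : ∑ i, (p i * Real.log (p i / q i) - p i + q i)
      = ∑ i, p i * Real.log (p i / q i) := by
    rw [Finset.sum_add_distrib, Finset.sum_sub_distrib, hp1, hq1]
    ring
  rw [hsplit] at hpt
  have heq : ∑ i, 3 * (p i - q i)^2 / (2 * (p i + 2 * q i))
      = (3/2) * ∑ i, (p i - q i)^2 / (p i + 2 * q i) := by
    rw [Finset.mul_sum]
    apply Finset.sum_congr rfl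
    intro i _
    field_simp
  rw [heq] at hpt
  linarith
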